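/- arXiv:1106.3184 — 3 statements merged into one kernel-verified Lean document; each statement's English description precedes it below -/
import Mathlib

section
/- Let n be a positive integer. Then Σ_{q=0}^{n−1} A_q* A_q = n·I, where I is the n²×n² identity matrix. -/
open MeasureTheory ProbabilityTheory Matrix

noncomputable section

/-- Cyclic translation on `ℂⁿ`: `(T h) q = h (q-1)`. -/
def Tmat (n : ℕ) : Matrix (Fin n) (Fin n) ℂ :=
  fun q j => if (j : ℕ) = ((q : ℕ) + (n - 1)) % n then 1 else 0

/-- Modulation on `ℂⁿ`: `(M h) q = exp(2πiq/n) h q`. -/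
def Mmat (n : ℕ) : Matrix (Fin n) (Fin n) ℂ :=
  Matrix.diagonal fun q => Complex.exp (2 * Real.pi * Complex.I * (q : ℕ) / n)

/-- Time-frequency shift `π(λ) = M^ℓ T^k` for `λ = (k, ℓ)`. -/
def pimat (n : ℕ) (lam : Fin n × Fin n) : Matrix (Fin n) (Fin n) ℂ :=
  Mmat n ^ (lam.2 : ℕ) * Tmat n ^ (lam.1 : ℕ)

/-- The matrix `A_q = (T^q | M T^q | ⋯ | M^{n-1} T^q)`: its column `λ = (k,ℓ)` is
the `k`-th column of `M^ℓ T^q`. -/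
def Amat (n : ℕ) (q : Fin n) : Matrix (Fin n) (Fin n × Fin n) ℂ :=
  fun r lam => (Mmat n ^ (lam.2 : ℕ) * Tmat n ^ (q : ℕ)) r lam.1

/-- The matrix `W_{q',q} = A_{q'}^* A_q` for `q' ≠ q`, and `0` for `q' = q`. -/
def Wmat (n : ℕ) (q' q : Fin n) : Matrix (Fin n × Fin n) (Fin n × Fin n) ℂ :=
  if q' = q then 0 else (Amat n q')ᴴ * Amat n q

/-- The matrix `B(x)` with entries `B(x)_{q',q} = x^* W_{q',q} x`. -/
def Bmat (n : ℕ) (x : Fin n × Fin n → ℂ) : Matrix (Fin n) (Fin n) ℂ :=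
  fun q' q => star x ⬝ᵥ (Wmat n q' q).mulVec x

/-- Euclidean (`ℓ₂`) norm of a finitely supported complex vector. -/
def euclNorm {ι : Type*} [Fintype ι] (x : ι → ℂ) : ℝ :=
  Real.sqrt (∑ i, ‖x i‖ ^ 2)

/-- Frobenius norm of a matrix. -/
def frobNorm {ι κ : Type*} [Fintype ι] [Fintype κ] (A : Matrix ι κ ℂ) : ℝ :=
  Real.sqrt (∑ i, ∑ j, ‖A i j‖ ^ 2)

/-- Operator (`ℓ₂ → ℓ₂`) norm of a matrix. -/
def opNorm {ι κ : Type*} [Fintype ι] [Fintype κ] (A : Matrix ι κ ℂ) : ℝ :=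
  sSup {c : ℝ | ∃ x : κ → ℂ, euclNorm x ≤ 1 ∧ c = euclNorm (A.mulVec x)}

open scoped Classical in
/-- Number of nonzero entries of a vector. -/
def sparsity {ι : Type*} [Fintype ι] (x : ι → ℂ) : ℕ :=
  (Finset.univ.filter fun j => x j ≠ 0).card

/-- `T_s`: unit-norm `s`-sparse vectors in `ℂ^{n²}`. -/
def sparseSphere (n s : ℕ) : Set (Fin n × Fin n → ℂ) :=
  {x | euclNorm x = 1 ∧ sparsity x ≤ s}

/-- Covering number: minimal cardinality of a subset `S ⊆ T` such that every point of `T`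
is within distance `u` (w.r.t. `d`) of a point of `S`. -/
def coveringNumber {α : Type*} (T : Set α) (d : α → α → ℝ) (u : ℝ) : ℝ :=
  sInf {N : ℝ | ∃ S : Finset α, ↑S ⊆ T ∧ (∀ x ∈ T, ∃ y ∈ S, d x y ≤ u) ∧ N = S.card}

/-- Restricted isometry constant of order `s` of the matrix `A`. -/
def ripConst {ι κ : Type*} [Fintype ι] [Fintype κ] (A : Matrix ι κ ℂ) (s : ℕ) : ℝ :=
  sInf {δ : ℝ | 0 ≤ δ ∧ ∀ x : κ → ℂ, sparsity x ≤ s →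
    (1 - δ) * euclNorm x ^ 2 ≤ euclNorm (A.mulVec x) ^ 2 ∧
      euclNorm (A.mulVec x) ^ 2 ≤ (1 + δ) * euclNorm x ^ 2}

/-- Gabor synthesis matrix: the column indexed by `λ` is `π(λ) g`. -/
def gaborMatrix (n : ℕ) (g : Fin n → ℂ) : Matrix (Fin n) (Fin n × Fin n) ℂ :=
  fun r lam => (pimat n lam).mulVec g r

/-- The Rademacher distribution on `ℂ`: values `±1` with probability `1/2` each. -/
def rademacherMeasure : Measure ℂ :=
  (2 : ENNReal)⁻¹ • (Measure.dirac 1 + Measure.dirac (-1))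

/-- The Steinhaus distribution: uniform distribution on the complex unit circle. -/
def steinhausMeasure : Measure ℂ :=
  Measure.map (fun t : ℝ => Complex.exp (2 * Real.pi * t * Complex.I))
    (volume.restrict (Set.Ioc (0 : ℝ) 1))

/-- `ε` is a Rademacher sequence: independent entries, each `±1` with probability 1/2. -/
def IsRademacherVec {Ω : Type*} [MeasurableSpace Ω] (μ : Measure Ω) {n : ℕ}
    (ε : Ω → Fin n → ℂ) : Prop :=
  iIndepFun (fun q ω => ε ω q) μ ∧
    ∀ q, μ.map (fun ω => ε ω q) = rademacherMeasure

/-- `ε` is a Steinhaus sequence: independent entries, each uniform on the unit circle. -/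
def IsSteinhausVec {Ω : Type*} [MeasurableSpace Ω] (μ : Measure Ω) {n : ℕ}
    (ε : Ω → Fin n → ℂ) : Prop :=
  iIndepFun (fun q ω => ε ω q) μ ∧
    ∀ q, μ.map (fun ω => ε ω q) = steinhausMeasure

end



private lemma Tmat_pow_apply (n m : ℕ) (r k : Fin n) :
    (Tmat n ^ m) r k = if (r : ℕ) = ((k : ℕ) + m) % n then 1 else 0 := by
  induction m generalizing r with
  | zero =>
    simp only [pow_zero, Matrix.one_apply, Nat.add_zero, Nat.mod_eq_of_lt k.isLt, Fin.ext_iff]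
  | succ m ih =>
    have hn : 0 < n := r.pos
    rw [pow_succ', Matrix.mul_apply]
    set j0 : Fin n := ⟨((r:ℕ) + (n-1)) % n, Nat.mod_lt _ hn⟩ with hj0
    have hT : ∀ j, Tmat n r j = if j = j0 then 1 else 0 := by
      intro j; simp [Tmat, hj0, Fin.ext_iff]
    simp only [hT, ite_mul, one_mul, zero_mul, Finset.sum_ite_eq', Finset.mem_univ, if_pos]
    rw [ih j0]
    have key : (((r:ℕ) + (n-1)) % n = ((k:ℕ)+m) % n) ↔ ((r:ℕ) = ((k:ℕ)+(m+1)) % n) := by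
      constructor
      · intro h2
        have h := Nat.ModEq.add_right 1 (show (r:ℕ) + (n-1) ≡ (k:ℕ) + m [MOD n] from h2)
        have h3 : (r:ℕ) + (n-1) + 1 = (r:ℕ) + n := by omega
        rw [h3] at h
        have h4 : (r:ℕ) + n ≡ (r:ℕ) [MOD n] := by
          simp [Nat.ModEq, Nat.add_mod_right]
        have h5 := h4.symm.trans h
        simpa [Nat.ModEq, Nat.mod_eq_of_lt r.isLt, Nat.add_assoc] using h5
      · intro h2
        have h5 : (r:ℕ) ≡ (k:ℕ) + (m+1) [MOD n] := by
          simpa [Nat.ModEq, Nat.mod_eq_of_lt r.isLt] using h2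
        have h := Nat.ModEq.add_right (n-1) h5
        have h6 : (k:ℕ) + (m+1) + (n-1) = (k:ℕ) + m + n := by omega
        rw [h6] at h
        have h7 : (k:ℕ) + m + n ≡ (k:ℕ) + m [MOD n] := by
          simp [Nat.ModEq, Nat.add_mod_right]
        exact h.trans h7
    exact if_congr key rfl rfl

private lemma Amat_apply' (n : ℕ) (q r : Fin n) (lam : Fin n × Fin n) :
    Amat n q r lam =
      Complex.exp (2 * Real.pi * Complex.I / n) ^ ((r : ℕ) * (lam.2 : ℕ)) *
        if r = lam.1 + q then 1 else 0 := by
  have hn : 0 < n := r.pos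
  unfold Amat Mmat
  rw [Matrix.diagonal_pow, Matrix.diagonal_mul, Tmat_pow_apply]
  have h1 : Complex.exp (2 * Real.pi * Complex.I * ((r:ℕ):ℂ) / n) =
      Complex.exp (2 * Real.pi * Complex.I / n) ^ (r:ℕ) := by
    rw [← Complex.exp_nat_mul]
    congr 1
    ring
  have h2 : (r = lam.1 + q) ↔ ((r:ℕ) = ((lam.1:ℕ) + (q:ℕ)) % n) := by
    rw [Fin.ext_iff, Fin.val_add]
  rw [Pi.pow_apply, h1, ← pow_mul]
  exact congrArg _ (if_congr h2.symm rfl rfl)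

private lemma sum_root (n : ℕ) (hn : 0 < n) (l' l : Fin n) :
    ∑ r : Fin n,
      (starRingEnd ℂ) (Complex.exp (2 * Real.pi * Complex.I / n) ^ ((r:ℕ) * (l':ℕ))) *
        Complex.exp (2 * Real.pi * Complex.I / n) ^ ((r:ℕ) * (l:ℕ)) =
      if l' = l then (n : ℂ) else 0 := by
  set ζ := Complex.exp (2 * Real.pi * Complex.I / n) with hζ
  have hz : ζ ≠ 0 := Complex.exp_ne_zero _
  have hζn : ζ ^ n = 1 := by
    rw [hζ, ← Complex.exp_nat_mul]
    have hn0 : (n:ℂ) ≠ 0 := Nat.cast_ne_zero.mpr hn.ne'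
    have h : (n:ℂ) * (2 * Real.pi * Complex.I / n) = 2 * Real.pi * Complex.I := by
      rw [mul_comm]
      exact div_mul_cancel₀ _ hn0
    rw [h, Complex.exp_two_pi_mul_I]
  have hconj : (starRingEnd ℂ) ζ = ζ⁻¹ := by
    rw [hζ, ← Complex.exp_conj, ← Complex.exp_neg]
    congr 1
    simp [map_div₀, map_ofNat]
    ring
  set w : ℂ := (ζ⁻¹) ^ (l':ℕ) * ζ ^ (l:ℕ) with hw
  have hterm : ∀ r : Fin n,
      (starRingEnd ℂ) (ζ ^ ((r:ℕ) * (l':ℕ))) * ζ ^ ((r:ℕ) * (l:ℕ)) = w ^ (r:ℕ) := by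
    intro r
    rw [map_pow, hconj, hw, mul_pow, ← pow_mul, ← pow_mul, mul_comm (l':ℕ) (r:ℕ),
      mul_comm (l:ℕ) (r:ℕ)]
  simp only [hterm]
  rw [Fin.sum_univ_eq_sum_range (fun i => w ^ i) n]
  by_cases hll : l' = l
  · subst hll
    have hw1 : w = 1 := by
      rw [hw, ← mul_pow, inv_mul_cancel₀ hz, one_pow]
    simp [hw1]
  · have hwne : w ≠ 1 := by
      intro h
      apply hll
      rw [hw, inv_pow, inv_mul_eq_one₀ (pow_ne_zero _ hz)] at h
      have prim : IsPrimitiveRoot ζ n := Complex.isPrimitiveRoot_exp n hn.ne'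
      exact Fin.ext (prim.pow_inj l'.isLt l.isLt h)
    have hwn : w ^ n = 1 := by
      have h1 : (ζ ^ (l:ℕ)) ^ n = 1 := by
        rw [← pow_mul, mul_comm, pow_mul, hζn, one_pow]
      have h2 : ((ζ⁻¹) ^ (l':ℕ)) ^ n = 1 := by
        rw [← pow_mul, mul_comm, pow_mul, inv_pow, hζn, inv_one, one_pow]
      rw [hw, mul_pow, h1, h2, one_mul]
    rw [geom_sum_eq hwne, hwn, sub_self, zero_div, if_neg hll]

/-- `∑_q A_q^* A_q = n · I` (Lemma 6, eq. (17)). -/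
theorem sum_Amat_conjTranspose_mul (n : ℕ) (hn : 0 < n) :
    ∑ q : Fin n, (Amat n q)ᴴ * Amat n q =
      (n : ℂ) • (1 : Matrix (Fin n × Fin n) (Fin n × Fin n) ℂ) := by
  ext ⟨k', l'⟩ ⟨k, l⟩
  rw [Matrix.sum_apply]
  have key : ∀ q : Fin n, ((Amat n q)ᴴ * Amat n q) (k', l') (k, l) =
      if k' = k then
        (starRingEnd ℂ) (Complex.exp (2 * Real.pi * Complex.I / n) ^
            (((k + q : Fin n):ℕ) * (l':ℕ))) *
          Complex.exp (2 * Real.pi * Complex.I / n) ^ (((k + q : Fin n):ℕ) * (l:ℕ))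
      else 0 := by
    intro q
    rw [Matrix.mul_apply]
    simp only [Matrix.conjTranspose_apply, Amat_apply', _root_.map_mul, apply_ite (starRingEnd ℂ),
      _root_.map_one, _root_.map_zero]
    by_cases h : k' = k
    · subst h
      simp only [mul_ite, mul_one, mul_zero, ite_mul, zero_mul, if_pos rfl]
      rw [Finset.sum_ite_eq' Finset.univ (k' + q)]
      simp
    · rw [if_neg h]
      apply Finset.sum_eq_zero
      intro r _
      by_cases hr : r = k + q
      · have : r ≠ k' + q := by
          intro hc
          exact h (add_right_cancel (hc.symm.trans hr))
        simp [this]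
      · simp [hr]
  rw [Finset.sum_congr rfl (fun q _ => key q)]
  haveI : NeZero n := ⟨hn.ne'⟩
  by_cases h : k' = k
  · subst h
    simp only [eq_self_iff_true, if_true]
    rw [Fintype.sum_bijective (fun q : Fin n => k' + q) (Equiv.addLeft k').bijective _
      (fun r : Fin n =>
        (starRingEnd ℂ) (Complex.exp (2 * Real.pi * Complex.I / n) ^ ((r:ℕ) * (l':ℕ))) *
          Complex.exp (2 * Real.pi * Complex.I / n) ^ ((r:ℕ) * (l:ℕ)))
      (fun q => rfl), sum_root n hn l' l]
    simp only [Matrix.smul_apply, Matrix.one_apply, Prod.mk.injEq, smul_eq_mul]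
    by_cases hll : l' = l <;> simp [hll]
  · simp only [Finset.sum_const_zero, Matrix.smul_apply, Matrix.one_apply, Prod.mk.injEq,
      smul_eq_mul]
    simp [h]
end

section
/- Let n be a positive integer. For all x, y ∈ ℂ^{n²}, Σ_{q=0}^{n−1} Σ_{q'=0}^{n−1} | x* A_{q'}* A_q y |² ≤ n · ‖x‖₀ · ‖x‖₂² · ‖y‖₂², where ‖x‖₀ is the number of nonzero entries of x. -/
open MeasureTheory ProbabilityTheory Matrix

open Matrix ComplexConjugate

namespace SumSqAux

noncomputable def zeta (n : ℕ) : ℂ := Complex.exp (2 * Real.pi * Complex.I / n)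

variable {n : ℕ}

lemma zeta_prim (hn : 0 < n) : IsPrimitiveRoot (zeta n) n :=
  Complex.isPrimitiveRoot_exp n hn.ne'

lemma zeta_pow_n (hn : 0 < n) : zeta n ^ n = 1 := (zeta_prim hn).pow_eq_one

lemma zeta_ne_zero : zeta n ≠ 0 := Complex.exp_ne_zero _

lemma abs_zeta (hn : 0 < n) : ‖zeta n‖ = 1 := by
  have h : ‖zeta n ^ n‖ = ‖(1:ℂ)‖ := by rw [zeta_pow_n hn]
  rw [norm_pow, norm_one] at h
  have h0 : (0:ℝ) ≤ ‖zeta n‖ := norm_nonneg _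
  by_contra hne
  rcases lt_or_gt_of_ne hne with hlt | hgt
  · have : ‖zeta n‖ ^ n < 1 := pow_lt_one₀ h0 hlt hn.ne'
    linarith
  · have : 1 < ‖zeta n‖ ^ n := one_lt_pow₀ hgt hn.ne'
    linarith

lemma conj_zeta (hn : 0 < n) : conj (zeta n) = (zeta n)⁻¹ := by
  have h1 : zeta n * conj (zeta n) = 1 := by
    rw [Complex.mul_conj]
    norm_cast
    rw [Complex.normSq_eq_norm_sq, abs_zeta hn, one_pow]
  exact eq_inv_of_mul_eq_one_right h1

lemma conj_zeta_pow (hn : 0 < n) (m : ℕ) : conj (zeta n ^ m) = (zeta n ^ m)⁻¹ := by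
  rw [map_pow, conj_zeta hn, inv_pow]

lemma abs_zeta_pow (hn : 0 < n) (m : ℕ) : ‖zeta n ^ m‖ = 1 := by
  rw [norm_pow, abs_zeta hn, one_pow]

/-- Orthogonality of characters. -/
lemma orth (hn : 0 < n) (a b : ℕ) (ha : a < n) (hb : b < n) :
    ∑ r : Fin n, zeta n ^ ((r : ℕ) * a) * conj (zeta n ^ ((r : ℕ) * b)) =
      if a = b then (n : ℂ) else 0 := by
  have key : ∀ r : Fin n, zeta n ^ ((r : ℕ) * a) * conj (zeta n ^ ((r : ℕ) * b)) =
      (zeta n ^ a * (zeta n ^ b)⁻¹) ^ (r : ℕ) := by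
    intro r
    rw [conj_zeta_pow hn, mul_pow, ← pow_mul, ← inv_pow, ← inv_pow, ← pow_mul]
    ring_nf
  simp only [key]
  by_cases hab : a = b
  · subst hab
    simp [mul_inv_cancel₀ (pow_ne_zero a (zeta_ne_zero (n := n)))]
  · rw [if_neg hab]
    set mu : ℂ := zeta n ^ a * (zeta n ^ b)⁻¹ with hmu
    have hmune : mu ≠ 1 := by
      intro hcon
      apply hab
      refine (zeta_prim hn).pow_inj ha hb ?_
      have hb0 : zeta n ^ b ≠ 0 := pow_ne_zero _ zeta_ne_zero
      rw [hmu] at hcon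
      exact (mul_inv_eq_one₀ hb0).mp hcon
    have hmun : mu ^ n = 1 := by
      rw [hmu, mul_pow, ← pow_mul, mul_comm a n, pow_mul, zeta_pow_n hn, one_pow,
        inv_pow, ← pow_mul, mul_comm b n, pow_mul, zeta_pow_n hn, one_pow, inv_one, mul_one]
    rw [Fin.sum_univ_eq_sum_range (fun i => mu ^ i), geom_sum_eq hmune, hmun]
    simp

/-- Parseval. -/
lemma parseval (hn : 0 < n) (c : Fin n → ℂ) :
    ∑ r : Fin n, ‖∑ ℓ : Fin n, (zeta n ^ (r : ℕ)) ^ (ℓ : ℕ) * c ℓ‖ ^ 2 =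
      (n : ℝ) * ∑ ℓ : Fin n, ‖c ℓ‖ ^ 2 := by
  have key : ∑ r : Fin n, ((∑ ℓ : Fin n, (zeta n ^ (r : ℕ)) ^ (ℓ : ℕ) * c ℓ) *
      conj (∑ ℓ : Fin n, (zeta n ^ (r : ℕ)) ^ (ℓ : ℕ) * c ℓ)) =
      (n : ℂ) * ∑ ℓ : Fin n, c ℓ * conj (c ℓ) := by
    have expand : ∀ r : Fin n, (∑ ℓ : Fin n, (zeta n ^ (r : ℕ)) ^ (ℓ : ℕ) * c ℓ) *
        conj (∑ ℓ : Fin n, (zeta n ^ (r : ℕ)) ^ (ℓ : ℕ) * c ℓ) =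
        ∑ ℓ : Fin n, ∑ ℓ' : Fin n,
          (zeta n ^ ((r:ℕ) * (ℓ:ℕ)) * conj (zeta n ^ ((r:ℕ) * (ℓ':ℕ)))) *
            (c ℓ * conj (c ℓ')) := by
      intro r
      rw [map_sum, Finset.sum_mul_sum]
      refine Finset.sum_congr rfl fun ℓ _ => Finset.sum_congr rfl fun ℓ' _ => ?_
      rw [map_mul (starRingEnd ℂ), ← pow_mul, ← pow_mul]
      ring
    rw [Finset.sum_congr rfl (fun r _ => expand r), Finset.sum_comm]
    rw [Finset.sum_congr rfl (fun ℓ (_ : ℓ ∈ Finset.univ) => Finset.sum_comm)]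
    have inner : ∀ ℓ ℓ' : Fin n, ∑ r : Fin n,
        (zeta n ^ ((r:ℕ) * (ℓ:ℕ)) * conj (zeta n ^ ((r:ℕ) * (ℓ':ℕ)))) * (c ℓ * conj (c ℓ')) =
        (if (ℓ:ℕ) = (ℓ':ℕ) then (n:ℂ) else 0) * (c ℓ * conj (c ℓ')) := by
      intro ℓ ℓ'
      rw [← Finset.sum_mul, orth hn _ _ ℓ.isLt ℓ'.isLt]
    rw [Finset.sum_congr rfl (fun ℓ _ => Finset.sum_congr rfl (fun ℓ' _ => inner ℓ ℓ'))]
    rw [Finset.mul_sum]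
    refine Finset.sum_congr rfl fun ℓ _ => ?_
    rw [Finset.sum_eq_single ℓ (fun b _ hb => by
        rw [if_neg (fun h => hb ((Fin.ext h)).symm), zero_mul])
      (fun h => absurd (Finset.mem_univ ℓ) h)]
    simp
  have h2 : ∀ z : ℂ, z * conj z = ((‖z‖ ^ 2 : ℝ) : ℂ) := by
    intro z
    rw [Complex.mul_conj, Complex.normSq_eq_norm_sq]
  simp only [h2] at key
  exact_mod_cast key

variable {n : ℕ}

lemma tmat_apply [NeZero n] (q j : Fin n) :
    Tmat n q j = if j = q - 1 then 1 else 0 := by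
  unfold Tmat
  congr 1
  simp only [eq_iff_iff]
  rw [Fin.ext_iff, Fin.sub_def]
  have hmod : ((q:ℕ) + (n-1)) % n = (n - ((1:Fin n):ℕ) + (q:ℕ)) % n := by
    have h1 : ((1:Fin n):ℕ) = 1 % n := Fin.val_one' n
    rcases Nat.lt_or_ge 1 n with h|h
    · rw [h1, Nat.mod_eq_of_lt h, Nat.add_comm]
    · have hn : 0 < n := n.pos_of_neZero
      have hn1 : n = 1 := by omega
      subst hn1
      simp [Nat.mod_one]
  rw [hmod]

open Fin.CommRing in
lemma tpow_apply [NeZero n] (m : ℕ) (r j : Fin n) :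
    (Tmat n ^ m) r j = if j = r - (m : Fin n) then 1 else 0 := by
  induction m generalizing j with
  | zero => simp [Matrix.one_apply, eq_comm]
  | succ m ih =>
    rw [pow_succ, Matrix.mul_apply]
    have step : ∀ p : Fin n, (Tmat n ^ m) r p * Tmat n p j =
        if p = r - (m : Fin n) then (if j = p - 1 then 1 else 0) else 0 := by
      intro p
      rw [ih p, tmat_apply]
      split <;> simp
    simp only [step]
    rw [Finset.sum_ite_eq' Finset.univ (r - (m : Fin n)) (fun p => if j = p - 1 then 1 else 0)]
    simp only [Finset.mem_univ, if_true]
    have hcast : ((m + 1 : ℕ) : Fin n) = (m : Fin n) + 1 := by push_cast; ring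
    rw [hcast, sub_sub]

open Fin.CommRing in
lemma amat_apply [NeZero n] (q r : Fin n) (lam : Fin n × Fin n) :
    Amat n q r lam = (zeta n ^ (r : ℕ)) ^ (lam.2 : ℕ) * (if lam.1 = r - q then 1 else 0) := by
  unfold Amat Mmat
  rw [Matrix.diagonal_pow, Matrix.diagonal_mul, tpow_apply, Fin.cast_val_eq_self, Pi.pow_apply]
  congr 2
  unfold zeta
  rw [← Complex.exp_nat_mul]
  congr 1
  ring

lemma amat_mulVec [NeZero n] (q : Fin n) (y : Fin n × Fin n → ℂ) (r : Fin n) :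
    (Amat n q).mulVec y r = ∑ ℓ : Fin n, (zeta n ^ (r : ℕ)) ^ (ℓ : ℕ) * y (r - q, ℓ) := by
  rw [Matrix.mulVec, dotProduct]
  rw [Fintype.sum_prod_type]
  rw [Finset.sum_comm]
  refine Finset.sum_congr rfl fun ℓ _ => ?_
  have step : ∀ k : Fin n, Amat n q r (k, ℓ) * y (k, ℓ) =
      if k = r - q then (zeta n ^ (r : ℕ)) ^ (ℓ : ℕ) * y (k, ℓ) else 0 := by
    intro k
    rw [amat_apply]
    split <;> simp
  simp only [step]
  rw [Finset.sum_ite_eq' Finset.univ (r - q) (fun k => (zeta n ^ (r : ℕ)) ^ (ℓ : ℕ) * y (k, ℓ))]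
  simp

lemma star_dot {m k : Type*} [Fintype m] [Fintype k] (A B : Matrix m k ℂ) (x y : k → ℂ) :
    star x ⬝ᵥ (Aᴴ * B).mulVec y = ∑ r : m, conj (A.mulVec x r) * (B.mulVec y r) := by
  rw [← Matrix.mulVec_mulVec, Matrix.dotProduct_mulVec, ← Matrix.star_mulVec,
    dotProduct]
  simp [Pi.star_apply, RCLike.star_def]

end SumSqAux

/-- `∑_{q,q'} |x^* A_{q'}^* A_q y|² ≤ n ‖x‖₀ ‖x‖₂² ‖y‖₂²` (Lemma 6, eq. (19)). -/
theorem sum_sq_inner_le (n : ℕ) (hn : 0 < n) (x y : Fin n × Fin n → ℂ) :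
    ∑ q : Fin n, ∑ q' : Fin n,
        ‖star x ⬝ᵥ ((Amat n q')ᴴ * Amat n q).mulVec y‖ ^ 2 ≤
      (n : ℝ) * (sparsity x : ℝ) * euclNorm x ^ 2 * euclNorm y ^ 2 := by
  classical
  haveI : NeZero n := ⟨hn.ne'⟩
  set ζ : ℂ := SumSqAux.zeta n with hζ
  set v : Fin n → Fin n → ℂ := fun q r => (Amat n q).mulVec y r with hv
  set supp : Finset (Fin n × Fin n) := Finset.univ.filter (fun p => x p ≠ 0) with hsupp
  set X2 : ℝ := ∑ p : Fin n × Fin n, ‖x p‖ ^ 2 with hX2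
  set Y2 : ℝ := ∑ p : Fin n × Fin n, ‖y p‖ ^ 2 with hY2
  have habsnn : ∀ z : ℂ, 0 ≤ ‖z‖ := fun z => norm_nonneg z
  -- Step A: pointwise Cauchy–Schwarz bound
  have stepA : ∀ q q' : Fin n,
      ‖star x ⬝ᵥ ((Amat n q')ᴴ * Amat n q).mulVec y‖ ^ 2 ≤
        X2 * ∑ p ∈ supp, ‖v q (p.1 + q')‖ ^ 2 := by
    intro q q'
    rw [SumSqAux.star_dot]
    have habs : ‖∑ r : Fin n, (starRingEnd ℂ) ((Amat n q').mulVec x r) * v q r‖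
        ≤ ∑ p : Fin n × Fin n, ‖x p‖ * ‖v q (p.1 + q')‖ := by
      calc ‖∑ r : Fin n, (starRingEnd ℂ) ((Amat n q').mulVec x r) * v q r‖
          ≤ ∑ r : Fin n, ‖(starRingEnd ℂ) ((Amat n q').mulVec x r) * v q r‖ :=
            norm_sum_le _ _
        _ = ∑ r : Fin n, ‖(Amat n q').mulVec x r‖ * ‖v q r‖ := by
            refine Finset.sum_congr rfl fun r _ => ?_
            rw [norm_mul, Complex.norm_conj]
        _ ≤ ∑ r : Fin n, (∑ ℓ' : Fin n, ‖x (r - q', ℓ')‖) * ‖v q r‖ := by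
            refine Finset.sum_le_sum fun r _ => ?_
            refine mul_le_mul_of_nonneg_right ?_ (habsnn _)
            rw [SumSqAux.amat_mulVec]
            calc ‖∑ ℓ' : Fin n, (SumSqAux.zeta n ^ (r : ℕ)) ^ (ℓ' : ℕ) * x (r - q', ℓ')‖
                ≤ ∑ ℓ' : Fin n, ‖(SumSqAux.zeta n ^ (r : ℕ)) ^ (ℓ' : ℕ) * x (r - q', ℓ')‖ :=
                  norm_sum_le _ _
              _ = ∑ ℓ' : Fin n, ‖x (r - q', ℓ')‖ := by
                  refine Finset.sum_congr rfl fun ℓ' _ => ?_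
                  rw [norm_mul, norm_pow, SumSqAux.abs_zeta_pow hn, one_pow, one_mul]
        _ = ∑ r : Fin n, ∑ ℓ' : Fin n, ‖x (r - q', ℓ')‖ * ‖v q r‖ := by
            refine Finset.sum_congr rfl fun r _ => ?_
            rw [Finset.sum_mul]
        _ = ∑ k' : Fin n, ∑ ℓ' : Fin n, ‖x (k', ℓ')‖ * ‖v q (k' + q')‖ := by
            refine (Fintype.sum_equiv (Equiv.addRight q')
              (fun k' => ∑ ℓ' : Fin n, ‖x (k', ℓ')‖ * ‖v q (k' + q')‖)
              (fun r => ∑ ℓ' : Fin n, ‖x (r - q', ℓ')‖ * ‖v q r‖)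
              (fun k' => ?_)).symm
            simp only [Equiv.coe_addRight, add_sub_cancel_right]
        _ = ∑ p : Fin n × Fin n, ‖x p‖ * ‖v q (p.1 + q')‖ := by
            rw [Fintype.sum_prod_type]
    have hrestrict : ∑ p : Fin n × Fin n, ‖x p‖ * ‖v q (p.1 + q')‖ =
        ∑ p ∈ supp, ‖x p‖ * ‖v q (p.1 + q')‖ := by
      refine (Finset.sum_filter_of_ne fun p _ hne => ?_).symm
      intro hx0
      apply hne
      rw [hx0, norm_zero, zero_mul]
    have hsq : ‖∑ r : Fin n, (starRingEnd ℂ) ((Amat n q').mulVec x r) * v q r‖ ^ 2 ≤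
        (∑ p ∈ supp, ‖x p‖ * ‖v q (p.1 + q')‖) ^ 2 := by
      rw [← hrestrict]
      exact pow_le_pow_left₀ (habsnn _) habs 2
    refine hsq.trans ?_
    calc (∑ p ∈ supp, ‖x p‖ * ‖v q (p.1 + q')‖) ^ 2
        ≤ (∑ p ∈ supp, ‖x p‖ ^ 2) * (∑ p ∈ supp, ‖v q (p.1 + q')‖ ^ 2) :=
          Finset.sum_mul_sq_le_sq_mul_sq _ _ _
      _ ≤ X2 * ∑ p ∈ supp, ‖v q (p.1 + q')‖ ^ 2 := by
          refine mul_le_mul_of_nonneg_right ?_ ?_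
          · exact Finset.sum_le_sum_of_subset_of_nonneg (Finset.filter_subset _ _)
              (fun p _ _ => sq_nonneg _)
          · exact Finset.sum_nonneg fun p _ => sq_nonneg _
  -- Step B: total mass computation
  have hVtotal : ∀ q : Fin n, ∑ r : Fin n, ‖v q r‖ ^ 2 =
      ∑ r : Fin n, ‖v q r‖ ^ 2 := fun _ => rfl
  have hParse : ∑ q : Fin n, ∑ r : Fin n, ‖v q r‖ ^ 2 = (n : ℝ) * Y2 := by
    rw [Finset.sum_comm]
    have hrow : ∀ r : Fin n, ∑ q : Fin n, ‖v q r‖ ^ 2 =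
        ∑ j : Fin n, ‖∑ ℓ : Fin n, (SumSqAux.zeta n ^ (r : ℕ)) ^ (ℓ : ℕ) * y (j, ℓ)‖ ^ 2 := by
      intro r
      refine Fintype.sum_equiv (Equiv.subLeft r) _ _ fun q => ?_
      simp only [Equiv.subLeft_apply]
      rw [hv]
      simp only []
      rw [SumSqAux.amat_mulVec]
    rw [Finset.sum_congr rfl fun r _ => hrow r, Finset.sum_comm]
    rw [Finset.sum_congr rfl fun j (_ : j ∈ Finset.univ) =>
      SumSqAux.parseval hn (fun ℓ => y (j, ℓ))]
    rw [← Finset.mul_sum, hY2, Fintype.sum_prod_type]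
  have stepB : ∑ q : Fin n, ∑ q' : Fin n,
      ‖star x ⬝ᵥ ((Amat n q')ᴴ * Amat n q).mulVec y‖ ^ 2 ≤
        X2 * ((supp.card : ℝ) * ((n : ℝ) * Y2)) := by
    calc ∑ q : Fin n, ∑ q' : Fin n,
        ‖star x ⬝ᵥ ((Amat n q')ᴴ * Amat n q).mulVec y‖ ^ 2
        ≤ ∑ q : Fin n, ∑ q' : Fin n, X2 * ∑ p ∈ supp, ‖v q (p.1 + q')‖ ^ 2 :=
          Finset.sum_le_sum fun q _ => Finset.sum_le_sum fun q' _ => stepA q q'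
      _ = X2 * ∑ q : Fin n, ∑ q' : Fin n, ∑ p ∈ supp, ‖v q (p.1 + q')‖ ^ 2 := by
          rw [Finset.mul_sum]
          refine Finset.sum_congr rfl fun q _ => ?_
          rw [Finset.mul_sum]
      _ = X2 * ((supp.card : ℝ) * ((n : ℝ) * Y2)) := by
          congr 1
          have hq' : ∀ q : Fin n, ∀ p : Fin n × Fin n,
              ∑ q' : Fin n, ‖v q (p.1 + q')‖ ^ 2 =
                ∑ r : Fin n, ‖v q r‖ ^ 2 := by
            intro q p
            exact Fintype.sum_equiv (Equiv.addLeft p.1) _ _ fun q' => rfl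
          calc ∑ q : Fin n, ∑ q' : Fin n, ∑ p ∈ supp, ‖v q (p.1 + q')‖ ^ 2
              = ∑ q : Fin n, ∑ p ∈ supp, ∑ q' : Fin n, ‖v q (p.1 + q')‖ ^ 2 := by
                refine Finset.sum_congr rfl fun q _ => Finset.sum_comm
            _ = ∑ q : Fin n, ∑ p ∈ supp, ∑ r : Fin n, ‖v q r‖ ^ 2 := by
                refine Finset.sum_congr rfl fun q _ => Finset.sum_congr rfl fun p _ => hq' q p
            _ = ∑ q : Fin n, (supp.card : ℝ) * ∑ r : Fin n, ‖v q r‖ ^ 2 := by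
                refine Finset.sum_congr rfl fun q _ => ?_
                rw [Finset.sum_const, nsmul_eq_mul]
            _ = (supp.card : ℝ) * ∑ q : Fin n, ∑ r : Fin n, ‖v q r‖ ^ 2 := by
                rw [← Finset.mul_sum]
            _ = (supp.card : ℝ) * ((n : ℝ) * Y2) := by rw [hParse]
  refine stepB.trans (le_of_eq ?_)
  have hcard : (supp.card : ℝ) = (sparsity x : ℝ) := by
    unfold sparsity
    rw [hsupp]
  have hx2 : euclNorm x ^ 2 = X2 := by
    unfold euclNorm
    rw [Real.sq_sqrt (Finset.sum_nonneg fun i _ => sq_nonneg _)]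
  have hy2 : euclNorm y ^ 2 = Y2 := by
    unfold euclNorm
    rw [Real.sq_sqrt (Finset.sum_nonneg fun i _ => sq_nonneg _)]
  rw [hcard, hx2, hy2]
  ring
end

section
/- Let n ≥ s ≥ 1 be integers and T_s = {x ∈ ℂ^{n²} : ‖x‖₂ = 1, ‖x‖₀ ≤ s}. Then for all x, y ∈ T_s, d₂(x,y) = ( Σ_{q'≠q} | x* A_{q'}* A_q x − y* A_{q'}* A_q y |² )^{1/2} ≤ 2 √(sn) · ‖x − y‖₂. -/
open MeasureTheory ProbabilityTheory Matrix

noncomputable section AuxD2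

open Finset
open Fin.NatCast

/-- `ω(r) = exp(2πi r / n)`. -/
noncomputable def om (n : ℕ) (r : Fin n) : ℂ :=
  Complex.exp (2 * Real.pi * Complex.I * (r : ℕ) / n)

lemma abs_om (n : ℕ) (r : Fin n) : ‖om n r‖ = 1 := by
  unfold om
  have : 2 * (Real.pi : ℂ) * Complex.I * (r : ℕ) / n
      = ((2 * Real.pi * r / n : ℝ) : ℂ) * Complex.I := by
    push_cast; ring
  rw [this, Complex.norm_exp_ofReal_mul_I]

lemma Tmat_apply (n : ℕ) [NeZero n] (q j : Fin n) :
    Tmat n q j = if j = q - 1 then 1 else 0 := by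
  have hn := Nat.pos_of_ne_zero (NeZero.ne n)
  have h1 : ((1 : Fin n) : ℕ) = 1 % n := Fin.val_one' n
  have hval : ((q - 1 : Fin n) : ℕ) = ((q : ℕ) + (n - 1)) % n := by
    rw [Fin.sub_def]
    simp only [h1]
    rcases Nat.eq_or_lt_of_le hn with h | h
    · simp [← h]
    · have h1n : 1 % n = 1 := Nat.mod_eq_of_lt h
      rw [h1n, Nat.add_comm]
  unfold Tmat
  by_cases h : j = q - 1
  · subst h; rw [if_pos hval, if_pos rfl]
  · rw [if_neg, if_neg h]
    intro hc
    exact h (Fin.ext (by rw [hval]; exact hc))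

lemma Tpow_apply (n : ℕ) [NeZero n] (m : ℕ) (q j : Fin n) :
    (Tmat n ^ m) q j = if j = q - (m : Fin n) then 1 else 0 := by
  induction m generalizing q j with
  | zero => simp [Matrix.one_apply, eq_comm]
  | succ m ih =>
    rw [pow_succ, Matrix.mul_apply]
    have : ∀ c : Fin n, (Tmat n ^ m) q c * Tmat n c j
        = if c = q - m then (if j = c - 1 then 1 else 0) else 0 := by
      intro c; rw [ih, Tmat_apply]
      by_cases h : c = q - m <;> simp [h]
    simp only [this, Finset.sum_ite_eq', Finset.mem_univ, if_true]
    have : q - (m : Fin n) - 1 = q - ((m : ℕ) + 1 : ℕ) := by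
      rw [sub_sub]; push_cast; ring_nf
    rw [this]

lemma Amat_apply (n : ℕ) [NeZero n] (q r : Fin n) (k l : Fin n) :
    Amat n q r (k, l) = if k = r - q then om n r ^ (l : ℕ) else 0 := by
  unfold Amat Mmat
  rw [Matrix.diagonal_pow, Matrix.mul_apply]
  have : ∀ c : Fin n,
      Matrix.diagonal ((fun q : Fin n => Complex.exp (2 * Real.pi * Complex.I * (q : ℕ) / n))
        ^ (l : ℕ)) r c * (Tmat n ^ (q : ℕ)) c k
      = if c = r then (om n r ^ (l : ℕ) * (Tmat n ^ (q : ℕ)) r k) else 0 := by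
    intro c
    by_cases h : c = r
    · subst h; simp [Matrix.diagonal_apply, om]
    · simp [Matrix.diagonal_apply, h, Ne.symm h]
  simp only [this, Finset.sum_ite_eq', Finset.mem_univ, if_true]
  rw [Tpow_apply, Fin.cast_val_eq_self, mul_ite, mul_one, mul_zero]

lemma om_eq_pow (n : ℕ) [NeZero n] (r : Fin n) :
    om n r = Complex.exp (2 * Real.pi * Complex.I / n) ^ (r : ℕ) := by
  rw [← Complex.exp_nat_mul]
  unfold om
  congr 1; ring

lemma sum_om_orth (n : ℕ) [NeZero n] (a b : Fin n) :
    ∑ r : Fin n, om n r ^ (a : ℕ) * (starRingEnd ℂ) (om n r ^ (b : ℕ))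
      = if a = b then (n : ℂ) else 0 := by
  have hn : n ≠ 0 := NeZero.ne n
  set W : ℂ := Complex.exp (2 * Real.pi * Complex.I / n) with hW
  have hprim : IsPrimitiveRoot W n := Complex.isPrimitiveRoot_exp n hn
  have hWn : W ^ (n : ℕ) = 1 := hprim.pow_eq_one
  have hconj : (starRingEnd ℂ) W = W⁻¹ := by
    rw [hW, ← Complex.exp_conj, ← Complex.exp_neg]
    congr 1
    have : 2 * (Real.pi : ℂ) * Complex.I / n = ((2 * Real.pi / n : ℝ) : ℂ) * Complex.I := by
      push_cast; ring
    rw [this, _root_.map_mul, Complex.conj_I, Complex.conj_ofReal]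
    ring
  set ζ : ℂ := W ^ ((a : ℤ) - (b : ℤ)) with hζ
  have hterm : ∀ r : Fin n,
      om n r ^ (a : ℕ) * (starRingEnd ℂ) (om n r ^ (b : ℕ)) = ζ ^ (r : ℕ) := by
    intro r
    rw [om_eq_pow, ← pow_mul, ← pow_mul, map_pow, hconj, hζ]
    rw [← zpow_natCast W ((r : ℕ) * (a : ℕ)), ← zpow_natCast W⁻¹ ((r : ℕ) * (b : ℕ)),
      _root_.inv_zpow, ← _root_.zpow_neg,
      ← zpow_add₀ (by simp [hprim.ne_zero hn] : W ≠ 0),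
      ← zpow_natCast (W ^ ((a:ℤ) - b)) (r : ℕ), ← _root_.zpow_mul]
    congr 1; push_cast; ring
  simp only [hterm]
  rw [Fin.sum_univ_eq_sum_range (fun i => ζ ^ i) n]
  by_cases hab : a = b
  · subst hab
    simp [hζ]
  · rw [if_neg hab]
    have hζ1 : ζ ≠ 1 := by
      intro hc
      rw [hζ] at hc
      rw [hprim.zpow_eq_one_iff_dvd] at hc
      have ha := a.isLt; have hb := b.isLt
      have ha' : (a : ℤ) < n := by exact_mod_cast ha
      have hb' : (b : ℤ) < n := by exact_mod_cast hb
      have ha0 : (0:ℤ) ≤ a := Int.natCast_nonneg _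
      have hb0 : (0:ℤ) ≤ b := Int.natCast_nonneg _
      have h0 : (a : ℤ) - b = 0 := Int.eq_zero_of_abs_lt_dvd hc (by rw [abs_lt]; omega)
      exact hab (Fin.ext (by omega))
    rw [geom_sum_eq hζ1]
    have : ζ ^ n = 1 := by
      rw [hζ, ← zpow_natCast (W ^ ((a:ℤ) - b)) n, ← _root_.zpow_mul, mul_comm,
        _root_.zpow_mul, zpow_natCast, hWn, _root_.one_zpow]
    rw [this, sub_self, zero_div]

lemma Amat_mulVec (n : ℕ) [NeZero n] (q : Fin n) (v : Fin n × Fin n → ℂ) (r : Fin n) :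
    (Amat n q).mulVec v r = ∑ l : Fin n, om n r ^ (l : ℕ) * v (r - q, l) := by
  unfold Matrix.mulVec dotProduct
  rw [Fintype.sum_prod_type]
  have : ∀ k l : Fin n, Amat n q r (k, l) * v (k, l)
      = if k = r - q then om n r ^ (l : ℕ) * v (k, l) else 0 := by
    intro k l; rw [Amat_apply]; by_cases h : k = r - q <;> simp [h]
  simp only [this]
  rw [Finset.sum_comm]
  simp [Finset.sum_ite_eq', Finset.mem_univ]

/-- Parseval-type identity: `∑_q ‖A_q v‖² = n ‖v‖²`. -/
lemma sum_Amat_mulVec_sq (n : ℕ) [NeZero n] (v : Fin n × Fin n → ℂ) :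
    ∑ q : Fin n, ∑ r : Fin n, ‖(Amat n q).mulVec v r‖ ^ 2
      = n * ∑ p : Fin n × Fin n, ‖v p‖ ^ 2 := by
  have key : ∀ k : Fin n,
      ∑ r : Fin n, ((∑ l : Fin n, om n r ^ (l : ℕ) * v (k, l)) *
        (starRingEnd ℂ) (∑ l : Fin n, om n r ^ (l : ℕ) * v (k, l)))
      = (n : ℂ) * ∑ l : Fin n, v (k, l) * (starRingEnd ℂ) (v (k, l)) := by
    intro k
    have expand : ∀ r : Fin n,
        ((∑ l : Fin n, om n r ^ (l : ℕ) * v (k, l)) *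
          (starRingEnd ℂ) (∑ l : Fin n, om n r ^ (l : ℕ) * v (k, l)))
        = ∑ l : Fin n, ∑ l' : Fin n,
            (om n r ^ (l : ℕ) * (starRingEnd ℂ) (om n r ^ (l' : ℕ))) *
              (v (k, l) * (starRingEnd ℂ) (v (k, l'))) := by
      intro r
      rw [map_sum, Finset.sum_mul_sum]
      apply Finset.sum_congr rfl; intro l _
      apply Finset.sum_congr rfl; intro l' _
      rw [_root_.map_mul]; ring
    simp only [expand]
    rw [Finset.sum_comm]
    have swap2 : ∀ l : Fin n, ∑ r : Fin n, ∑ l' : Fin n,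
        (om n r ^ (l : ℕ) * (starRingEnd ℂ) (om n r ^ (l' : ℕ))) *
          (v (k, l) * (starRingEnd ℂ) (v (k, l')))
        = ∑ l' : Fin n,
            (if l = l' then (n:ℂ) else 0) * (v (k, l) * (starRingEnd ℂ) (v (k, l'))) := by
      intro l
      rw [Finset.sum_comm]
      apply Finset.sum_congr rfl; intro l' _
      rw [← Finset.sum_mul, sum_om_orth]
    simp only [swap2]
    rw [Finset.mul_sum]
    apply Finset.sum_congr rfl; intro l _
    simp
  have hrw : ∀ q r : Fin n, ‖(Amat n q).mulVec v r‖ ^ 2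
      = (((Amat n q).mulVec v r) * (starRingEnd ℂ) ((Amat n q).mulVec v r)).re := by
    intro q r
    rw [Complex.mul_conj, Complex.normSq_eq_norm_sq,
      Complex.ofReal_re]
  simp only [hrw]
  rw [Finset.sum_comm]
  have reidx : ∀ r : Fin n, ∑ q : Fin n,
      (((Amat n q).mulVec v r) * (starRingEnd ℂ) ((Amat n q).mulVec v r)).re
      = ∑ k : Fin n, ((∑ l : Fin n, om n r ^ (l : ℕ) * v (k, l)) *
          (starRingEnd ℂ) (∑ l : Fin n, om n r ^ (l : ℕ) * v (k, l))).re := by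
    intro r
    rw [← Equiv.sum_comp (Equiv.subLeft r) (fun k => ((∑ l : Fin n, om n r ^ (l : ℕ) * v (k, l)) *
          (starRingEnd ℂ) (∑ l : Fin n, om n r ^ (l : ℕ) * v (k, l))).re)]
    apply Finset.sum_congr rfl; intro q _
    simp only [Equiv.subLeft_apply]
    congr 2 <;> rw [Amat_mulVec]
  simp only [reidx]
  rw [Finset.sum_comm]
  have hlast : ∀ k : Fin n, ∑ r : Fin n, ((∑ l : Fin n, om n r ^ (l : ℕ) * v (k, l)) *
          (starRingEnd ℂ) (∑ l : Fin n, om n r ^ (l : ℕ) * v (k, l))).re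
      = n * ∑ l : Fin n, ‖v (k, l)‖ ^ 2 := by
    intro k
    rw [← Complex.re_sum, key]
    have : ∑ l : Fin n, v (k, l) * (starRingEnd ℂ) (v (k, l))
        = ((∑ l : Fin n, ‖v (k, l)‖ ^ 2 : ℝ) : ℂ) := by
      rw [Complex.ofReal_sum]
      apply Finset.sum_congr rfl; intro l _
      rw [Complex.mul_conj, Complex.normSq_eq_norm_sq, Complex.ofReal_pow]
    rw [this, ← Complex.ofReal_natCast, ← Complex.ofReal_mul, Complex.ofReal_re]
  simp only [hlast]
  rw [← Finset.mul_sum, Fintype.sum_prod_type]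

lemma Amat_conjT_mulVec (n : ℕ) [NeZero n] (q : Fin n) (w : Fin n → ℂ) (k l : Fin n) :
    (Amat n q)ᴴ.mulVec w (k, l)
      = (starRingEnd ℂ) (om n (k + q) ^ (l : ℕ)) * w (k + q) := by
  unfold Matrix.mulVec dotProduct
  have : ∀ r : Fin n, (Amat n q)ᴴ (k, l) r * w r
      = if r = k + q then (starRingEnd ℂ) (om n r ^ (l : ℕ)) * w r else 0 := by
    intro r
    rw [Matrix.conjTranspose_apply, Amat_apply]
    have hiff : k = r - q ↔ r = k + q := by
      constructor
      · intro h; rw [h]; simp [sub_add_cancel]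
      · intro h; rw [h]; simp [add_sub_cancel_right]
    by_cases h : r = k + q
    · rw [if_pos (hiff.mpr h), if_pos h]; rfl
    · rw [if_neg (fun hc => h (hiff.mp hc)), if_neg h, star_zero, zero_mul]
  simp only [this, Finset.sum_ite_eq', Finset.mem_univ, if_true]

open scoped Classical in
lemma norm_dot_le (n : ℕ) [NeZero n] (q : Fin n) (x : Fin n × Fin n → ℂ) (w : Fin n → ℂ) :
    ‖star x ⬝ᵥ (Amat n q)ᴴ.mulVec w‖
      ≤ ∑ p ∈ Finset.univ.filter (fun p => x p ≠ 0), ‖x p‖ * ‖w (p.1 + q)‖ := by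
  have hdot : star x ⬝ᵥ (Amat n q)ᴴ.mulVec w
      = ∑ p : Fin n × Fin n, (starRingEnd ℂ) (x p) *
          ((starRingEnd ℂ) (om n (p.1 + q) ^ (p.2 : ℕ)) * w (p.1 + q)) := by
    unfold dotProduct
    apply Finset.sum_congr rfl
    intro p _
    rw [← Amat_conjT_mulVec n q w p.1 p.2]
    rfl
  rw [hdot]
  calc ‖∑ p : Fin n × Fin n, (starRingEnd ℂ) (x p) *
          ((starRingEnd ℂ) (om n (p.1 + q) ^ (p.2 : ℕ)) * w (p.1 + q))‖
      ≤ ∑ p : Fin n × Fin n, ‖(starRingEnd ℂ) (x p) *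
          ((starRingEnd ℂ) (om n (p.1 + q) ^ (p.2 : ℕ)) * w (p.1 + q))‖ := norm_sum_le _ _
    _ = ∑ p : Fin n × Fin n, ‖x p‖ * ‖w (p.1 + q)‖ := by
        apply Finset.sum_congr rfl; intro p _
        rw [norm_mul, norm_mul, RCLike.norm_conj, RCLike.norm_conj]
        have : ‖om n (p.1 + q) ^ (p.2 : ℕ)‖ = 1 := by
          rw [norm_pow, abs_om, one_pow]
        rw [this, one_mul]
    _ = ∑ p ∈ Finset.univ.filter (fun p => x p ≠ 0), ‖x p‖ * ‖w (p.1 + q)‖ := by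
        symm
        apply Finset.sum_subset (Finset.filter_subset _ _)
        intro p _ hp
        simp only [Finset.mem_filter, Finset.mem_univ, true_and, not_not] at hp
        rw [hp, norm_zero, zero_mul]

open scoped Classical in
lemma sparse_dot_bound (n s : ℕ) [NeZero n] (x : Fin n × Fin n → ℂ)
    (hx1 : euclNorm x = 1) (hxs : sparsity x ≤ s) (w : Fin n → ℂ) :
    ∑ q : Fin n, ‖star x ⬝ᵥ (Amat n q)ᴴ.mulVec w‖ ^ 2
      ≤ s * ∑ r : Fin n, ‖w r‖ ^ 2 := by
  set S := Finset.univ.filter (fun p : Fin n × Fin n => x p ≠ 0) with hS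
  have hcard : S.card ≤ s := by
    have : sparsity x = S.card := by
      unfold sparsity; congr 1
    omega
  have hxsum : ∑ p ∈ S, ‖x p‖ ^ 2 ≤ 1 := by
    have h1 : ∑ p : Fin n × Fin n, ‖x p‖ ^ 2 = 1 := by
      have := hx1
      unfold euclNorm at this
      have hnn : 0 ≤ ∑ p : Fin n × Fin n, ‖x p‖ ^ 2 :=
        Finset.sum_nonneg fun p _ => sq_nonneg _
      nlinarith [Real.sq_sqrt hnn]
    calc ∑ p ∈ S, ‖x p‖ ^ 2 ≤ ∑ p : Fin n × Fin n, ‖x p‖ ^ 2 :=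
          Finset.sum_le_sum_of_subset_of_nonneg (Finset.subset_univ _)
            (fun p _ _ => sq_nonneg _)
      _ = 1 := h1
  have step1 : ∀ q : Fin n, ‖star x ⬝ᵥ (Amat n q)ᴴ.mulVec w‖ ^ 2
      ≤ ∑ p ∈ S, ‖w (p.1 + q)‖ ^ 2 := by
    intro q
    have h1 := norm_dot_le n q x w
    have h2 : (∑ p ∈ S, ‖x p‖ * ‖w (p.1 + q)‖) ^ 2
        ≤ (∑ p ∈ S, ‖x p‖ ^ 2) * ∑ p ∈ S, ‖w (p.1 + q)‖ ^ 2 :=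
      Finset.sum_mul_sq_le_sq_mul_sq S _ _
    have h3 : ‖star x ⬝ᵥ (Amat n q)ᴴ.mulVec w‖ ^ 2
        ≤ (∑ p ∈ S, ‖x p‖ * ‖w (p.1 + q)‖) ^ 2 := by
      apply pow_le_pow_left₀ (norm_nonneg _) h1
    have h4 : (∑ p ∈ S, ‖x p‖ ^ 2) * (∑ p ∈ S, ‖w (p.1 + q)‖ ^ 2)
        ≤ ∑ p ∈ S, ‖w (p.1 + q)‖ ^ 2 := by
      have hnn : 0 ≤ ∑ p ∈ S, ‖w (p.1 + q)‖ ^ 2 :=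
        Finset.sum_nonneg fun p _ => sq_nonneg _
      nlinarith
    linarith
  calc ∑ q : Fin n, ‖star x ⬝ᵥ (Amat n q)ᴴ.mulVec w‖ ^ 2
      ≤ ∑ q : Fin n, ∑ p ∈ S, ‖w (p.1 + q)‖ ^ 2 := Finset.sum_le_sum fun q _ => step1 q
    _ = ∑ p ∈ S, ∑ q : Fin n, ‖w (p.1 + q)‖ ^ 2 := Finset.sum_comm
    _ = ∑ p ∈ S, ∑ r : Fin n, ‖w r‖ ^ 2 := by
        apply Finset.sum_congr rfl; intro p _
        exact Fintype.sum_equiv (Equiv.addLeft p.1) _ _ (fun q => rfl)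
    _ = (S.card : ℝ) * ∑ r : Fin n, ‖w r‖ ^ 2 := by
        rw [Finset.sum_const, nsmul_eq_mul]
    _ ≤ s * ∑ r : Fin n, ‖w r‖ ^ 2 := by
        apply mul_le_mul_of_nonneg_right _ (Finset.sum_nonneg fun r _ => sq_nonneg _)
        exact_mod_cast hcard

lemma conj_dot {ι : Type*} [Fintype ι] (a b : ι → ℂ) (M : Matrix ι ι ℂ) :
    (starRingEnd ℂ) (star a ⬝ᵥ M.mulVec b) = star b ⬝ᵥ Mᴴ.mulVec a := by
  simp only [Matrix.mulVec, dotProduct, map_sum, _root_.map_mul, Pi.star_apply,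
    RCLike.star_def, Complex.conj_conj, Matrix.conjTranspose_apply, Finset.mul_sum]
  rw [Finset.sum_comm]
  apply Finset.sum_congr rfl; intro j _
  apply Finset.sum_congr rfl; intro i _
  ring

lemma dot_sub_dot {ι : Type*} [Fintype ι] (M : Matrix ι ι ℂ) (x y : ι → ℂ) :
    star x ⬝ᵥ M.mulVec x - star y ⬝ᵥ M.mulVec y
      = star (x - y) ⬝ᵥ M.mulVec x + star y ⬝ᵥ M.mulVec (x - y) := by
  rw [star_sub, sub_dotProduct, Matrix.mulVec_sub, dotProduct_sub]
  ring

lemma l2_triangle {ι : Type*} [Fintype ι] (f g : ι → ℂ) :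
    Real.sqrt (∑ i, ‖f i + g i‖ ^ 2)
      ≤ Real.sqrt (∑ i, ‖f i‖ ^ 2) + Real.sqrt (∑ i, ‖g i‖ ^ 2) := by
  have h1 : ‖(WithLp.toLp 2 f : EuclideanSpace ℂ ι) + (WithLp.toLp 2 g : EuclideanSpace ℂ ι)‖
      ≤ ‖(WithLp.toLp 2 f : EuclideanSpace ℂ ι)‖ + ‖(WithLp.toLp 2 g : EuclideanSpace ℂ ι)‖ :=
    norm_add_le _ _
  rw [EuclideanSpace.norm_eq, EuclideanSpace.norm_eq, EuclideanSpace.norm_eq] at h1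
  exact h1

end AuxD2

/-- `d₂(x,y) ≤ 2 √(sn) ‖x-y‖₂` on `T_s`. -/
theorem d2_lipschitz (n s : ℕ) (hs : 1 ≤ s) (hsn : s ≤ n) (x y : Fin n × Fin n → ℂ)
    (hx : x ∈ sparseSphere n s) (hy : y ∈ sparseSphere n s) :
    frobNorm (Bmat n x - Bmat n y) =
      Real.sqrt (∑ q' : Fin n, ∑ q : Fin n, if q' = q then 0 else
        ‖star x ⬝ᵥ ((Amat n q')ᴴ * Amat n q).mulVec x -
          star y ⬝ᵥ ((Amat n q')ᴴ * Amat n q).mulVec y‖ ^ 2) ∧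
    frobNorm (Bmat n x - Bmat n y) ≤ 2 * Real.sqrt ((s : ℝ) * n) * euclNorm (x - y) := by
  classical
  haveI : NeZero n := ⟨by omega⟩
  obtain ⟨hx1, hxs⟩ := hx
  obtain ⟨hy1, hys⟩ := hy
  -- entries of the difference
  have hentry : ∀ q' q : Fin n, (Bmat n x - Bmat n y) q' q
      = if q' = q then 0 else
          (star x ⬝ᵥ ((Amat n q')ᴴ * Amat n q).mulVec x -
            star y ⬝ᵥ ((Amat n q')ᴴ * Amat n q).mulVec y) := by
    intro q' q
    rw [Matrix.sub_apply]
    unfold Bmat Wmat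
    by_cases h : q' = q
    · simp [h]
    · rw [if_neg h, if_neg h]
  constructor
  · unfold frobNorm
    congr 1
    apply Finset.sum_congr rfl; intro q' _
    apply Finset.sum_congr rfl; intro q _
    rw [hentry]
    by_cases h : q' = q
    · simp [h]
    · rw [if_neg h, if_neg h]
  · set z : Fin n × Fin n → ℂ := x - y with hz
    set t1 : Fin n × Fin n → ℂ := fun p =>
      star z ⬝ᵥ ((Amat n p.1)ᴴ * Amat n p.2).mulVec x with ht1
    set t2 : Fin n × Fin n → ℂ := fun p =>
      star y ⬝ᵥ ((Amat n p.1)ᴴ * Amat n p.2).mulVec z with ht2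
    set Z : ℝ := ∑ p : Fin n × Fin n, ‖z p‖ ^ 2 with hZ
    have hZnn : 0 ≤ Z := Finset.sum_nonneg fun p _ => sq_nonneg _
    have hF2 : ∑ p : Fin n × Fin n, ‖t1 p‖ ^ 2 ≤ s * (n * Z) := by
      rw [Fintype.sum_prod_type]
      have hq' : ∀ q' : Fin n, ∑ q : Fin n, ‖t1 (q', q)‖ ^ 2
          ≤ s * ∑ r : Fin n, ‖(Amat n q').mulVec z r‖ ^ 2 := by
        intro q'
        have heq : ∀ q : Fin n, ‖t1 (q', q)‖
            = ‖star x ⬝ᵥ (Amat n q)ᴴ.mulVec ((Amat n q').mulVec z)‖ := by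
          intro q
          rw [ht1]
          rw [← RCLike.norm_conj (star z ⬝ᵥ ((Amat n q')ᴴ * Amat n q).mulVec x)]
          congr 1
          rw [conj_dot, Matrix.conjTranspose_mul, Matrix.conjTranspose_conjTranspose,
            Matrix.mulVec_mulVec]
        simp only [heq]
        exact sparse_dot_bound n s x hx1 hxs ((Amat n q').mulVec z)
      calc ∑ q' : Fin n, ∑ q : Fin n, ‖t1 (q', q)‖ ^ 2
          ≤ ∑ q' : Fin n, (s : ℝ) * ∑ r : Fin n, ‖(Amat n q').mulVec z r‖ ^ 2 :=
            Finset.sum_le_sum fun q' _ => hq' q'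
        _ = s * ∑ q' : Fin n, ∑ r : Fin n, ‖(Amat n q').mulVec z r‖ ^ 2 := by
            rw [Finset.mul_sum]
        _ = s * (n * Z) := by rw [sum_Amat_mulVec_sq]
    have hG2 : ∑ p : Fin n × Fin n, ‖t2 p‖ ^ 2 ≤ s * (n * Z) := by
      rw [Fintype.sum_prod_type, Finset.sum_comm]
      have hq : ∀ q : Fin n, ∑ q' : Fin n, ‖t2 (q', q)‖ ^ 2
          ≤ s * ∑ r : Fin n, ‖(Amat n q).mulVec z r‖ ^ 2 := by
        intro q
        have heq : ∀ q' : Fin n, ‖t2 (q', q)‖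
            = ‖star y ⬝ᵥ (Amat n q')ᴴ.mulVec ((Amat n q).mulVec z)‖ := by
          intro q'
          rw [ht2, Matrix.mulVec_mulVec]
        simp only [heq]
        exact sparse_dot_bound n s y hy1 hys ((Amat n q).mulVec z)
      calc ∑ q : Fin n, ∑ q' : Fin n, ‖t2 (q', q)‖ ^ 2
          ≤ ∑ q : Fin n, (s : ℝ) * ∑ r : Fin n, ‖(Amat n q).mulVec z r‖ ^ 2 :=
            Finset.sum_le_sum fun q _ => hq q
        _ = s * ∑ q : Fin n, ∑ r : Fin n, ‖(Amat n q).mulVec z r‖ ^ 2 := by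
            rw [Finset.mul_sum]
        _ = s * (n * Z) := by rw [sum_Amat_mulVec_sq]
    -- ℓ₂ triangle inequality and conclusion
    have hfrob : frobNorm (Bmat n x - Bmat n y)
        ≤ Real.sqrt (∑ p : Fin n × Fin n, ‖t1 p + t2 p‖ ^ 2) := by
      unfold frobNorm
      apply Real.sqrt_le_sqrt
      rw [Fintype.sum_prod_type (fun p : Fin n × Fin n => ‖t1 p + t2 p‖ ^ 2)]
      apply Finset.sum_le_sum; intro q' _
      apply Finset.sum_le_sum; intro q _
      rw [hentry]
      by_cases h : q' = q
      · rw [if_pos h, norm_zero]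
        simp only [zero_pow, OfNat.ofNat_ne_zero, ne_eq, not_false_eq_true]; positivity
      · rw [if_neg h]
        have : star x ⬝ᵥ ((Amat n q')ᴴ * Amat n q).mulVec x -
            star y ⬝ᵥ ((Amat n q')ᴴ * Amat n q).mulVec y = t1 (q', q) + t2 (q', q) := by
          rw [ht1, ht2]
          exact dot_sub_dot _ x y
        rw [this]
    have htr := l2_triangle t1 t2
    have hnF : Real.sqrt (∑ p : Fin n × Fin n, ‖t1 p‖ ^ 2)
        ≤ Real.sqrt ((s : ℝ) * (n * Z)) := Real.sqrt_le_sqrt hF2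
    have hnG : Real.sqrt (∑ p : Fin n × Fin n, ‖t2 p‖ ^ 2)
        ≤ Real.sqrt ((s : ℝ) * (n * Z)) := Real.sqrt_le_sqrt hG2
    have hsplit : Real.sqrt ((s : ℝ) * (n * Z)) = Real.sqrt ((s : ℝ) * n) * Real.sqrt Z := by
      rw [← mul_assoc, Real.sqrt_mul (by positivity)]
    have heucl : euclNorm (x - y) = Real.sqrt Z := by
      unfold euclNorm
      rw [hZ, hz]
    calc frobNorm (Bmat n x - Bmat n y)
        ≤ Real.sqrt (∑ p : Fin n × Fin n, ‖t1 p + t2 p‖ ^ 2) := hfrob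
      _ ≤ Real.sqrt (∑ p : Fin n × Fin n, ‖t1 p‖ ^ 2)
            + Real.sqrt (∑ p : Fin n × Fin n, ‖t2 p‖ ^ 2) := htr
      _ ≤ Real.sqrt ((s : ℝ) * (n * Z)) + Real.sqrt ((s : ℝ) * (n * Z)) := add_le_add hnF hnG
      _ = 2 * Real.sqrt ((s : ℝ) * n) * euclNorm (x - y) := by
          rw [hsplit, heucl]; ring
end
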